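/- Let n ≥ 2, λ ∈ ℂ with |λ| = 1, u = (1,i)ᵀ/√2 ∈ ℂ², and define the n-mode tensor T_{n,λ} = (λ·⊗ⁿu + conj(λ)·⊗ⁿconj(u))/√2 on ℂ². Then ‖T_{n,λ}‖_{∞,ℂ} = 1/√2 and ‖T_{n,λ}‖_{1,ℂ} = √2. -/

import Mathlib

noncomputable section


/-- The Euclidean norm of a vector in `𝕜^k`. -/
def vnorm {𝕜 : Type*} [RCLike 𝕜] {k : ℕ} (x : Fin k → 𝕜) : ℝ :=
  Real.sqrt (∑ i, ‖x i‖ ^ 2)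

/-- The rank-one tensor `x₁ ⊗ ⋯ ⊗ x_d` on `𝕜^n`. -/
def rankOne {𝕜 : Type*} [RCLike 𝕜] {d n : ℕ} (x : Fin d → Fin n → 𝕜) :
    (Fin d → Fin n) → 𝕜 :=
  fun i => ∏ j, x j (i j)

/-- The standard inner product `⟨T, Y⟩ = ∑ tᵢ · conj yᵢ` of tensors. -/
def tinner {𝕜 : Type*} [RCLike 𝕜] {d n : ℕ} (T Y : (Fin d → Fin n) → 𝕜) : 𝕜 :=
  ∑ i, T i * (starRingEnd 𝕜) (Y i)

/-- The Hilbert–Schmidt norm of a tensor. -/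
def hsNorm {𝕜 : Type*} [RCLike 𝕜] {d n : ℕ} (T : (Fin d → Fin n) → 𝕜) : ℝ :=
  Real.sqrt (∑ i, ‖T i‖ ^ 2)

/-- The spectral norm of a tensor:
`max {|⟨T, x₁⊗⋯⊗x_d⟩| : ‖x_j‖ = 1 for all j}`. -/
def specNorm {𝕜 : Type*} [RCLike 𝕜] {d n : ℕ} (T : (Fin d → Fin n) → 𝕜) : ℝ :=
  sSup {r : ℝ | ∃ x : Fin d → Fin n → 𝕜, (∀ j, vnorm (x j) = 1) ∧
    r = ‖tinner T (rankOne x)‖}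

/-- The nuclear norm of a tensor:
`min {∑ᵢ ∏ⱼ ‖x_{i,j}‖ : T = ∑ᵢ x_{i,1}⊗⋯⊗x_{i,d}}`. -/
def nucNorm {𝕜 : Type*} [RCLike 𝕜] {d n : ℕ} (T : (Fin d → Fin n) → 𝕜) : ℝ :=
  sInf {r : ℝ | ∃ (m : ℕ) (x : Fin m → Fin d → Fin n → 𝕜),
    T = (∑ i, rankOne (x i)) ∧ r = ∑ i, ∏ j, vnorm (x i j)}

/-- `α(n^{×d}, 𝕜)`. -/
def alphaN (𝕜 : Type*) [RCLike 𝕜] (d n : ℕ) : ℝ :=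
  sSup {r : ℝ | ∃ T : (Fin d → Fin n) → 𝕜, hsNorm T = 1 ∧ r = nucNorm T}

/-- `β(n^{×d}, 𝕜)`. -/
def betaN (𝕜 : Type*) [RCLike 𝕜] (d n : ℕ) : ℝ :=
  sInf {r : ℝ | ∃ T : (Fin d → Fin n) → 𝕜, hsNorm T = 1 ∧ r = specNorm T}

/-- The vector `u = (1, i)ᵀ/√2 ∈ ℂ²`. -/
def uvec : Fin 2 → ℂ := fun k =>
  if k = 0 then (Real.sqrt 2 : ℂ)⁻¹ else Complex.I * (Real.sqrt 2 : ℂ)⁻¹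

/-- The tensor `T_{n,λ} = (λ·⊗ⁿu + conj λ·⊗ⁿ(conj u))/√2` on `ℂ²`. -/
def Tnl (n : ℕ) (lam : ℂ) : (Fin n → Fin 2) → ℂ := fun i =>
  (lam * ∏ j, uvec (i j) +
    (starRingEnd ℂ) lam * ∏ j, (starRingEnd ℂ) (uvec (i j))) / (Real.sqrt 2 : ℂ)

lemma vnorm_sq {k : ℕ} (v : Fin k → ℂ) : vnorm v ^ 2 = ∑ i, ‖v i‖ ^ 2 := by
  unfold vnorm
  rw [Real.sq_sqrt]
  positivity

lemma vnorm_nonneg {k : ℕ} (v : Fin k → ℂ) : 0 ≤ vnorm v := Real.sqrt_nonneg _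

lemma vnorm_smul {k : ℕ} (c : ℂ) (v : Fin k → ℂ) :
    vnorm (fun i => c * v i) = ‖c‖ * vnorm v := by
  unfold vnorm
  rw [← Real.sqrt_sq (norm_nonneg c), ← Real.sqrt_mul (by positivity), Finset.mul_sum]
  congr 1
  refine Finset.sum_congr rfl fun i _ => ?_
  rw [norm_mul]; ring

lemma sqrt2_mul_self : Real.sqrt 2 * Real.sqrt 2 = 2 :=
  Real.mul_self_sqrt (by norm_num)

lemma sqrt2_pos : 0 < Real.sqrt 2 := Real.sqrt_pos.2 (by norm_num)

lemma norm_sqrt2_inv : ‖((Real.sqrt 2 : ℂ))⁻¹‖ = (Real.sqrt 2)⁻¹ := by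
  rw [norm_inv, Complex.norm_real, Real.norm_eq_abs, abs_of_nonneg (Real.sqrt_nonneg 2)]

open Finset in
lemma tinner_rankOne {d n : ℕ} (x y : Fin d → Fin n → ℂ) :
    tinner (rankOne x) (rankOne y) = ∏ j, ∑ k, x j k * (starRingEnd ℂ) (y j k) := by
  unfold tinner rankOne
  rw [Finset.prod_univ_sum]
  rw [Fintype.piFinset_univ]
  refine Finset.sum_congr rfl fun i _ => ?_
  rw [map_prod, ← Finset.prod_mul_distrib]

lemma uvec0 : uvec 0 = (Real.sqrt 2 : ℂ)⁻¹ := by simp [uvec]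
lemma uvec1 : uvec 1 = Complex.I * (Real.sqrt 2 : ℂ)⁻¹ := by simp [uvec]

lemma sqrt2C_sq : ((Real.sqrt 2 : ℝ) : ℂ) ^ 2 = 2 := by
  rw [← Complex.ofReal_pow, Real.sq_sqrt (by norm_num : (0:ℝ) ≤ 2)]; norm_num

lemma sqrt2C_ne : ((Real.sqrt 2 : ℝ) : ℂ) ≠ 0 := by
  simp [Complex.ofReal_ne_zero]


lemma vnorm_uvec : vnorm uvec = 1 := by
  unfold vnorm
  rw [Fin.sum_univ_two, uvec0, uvec1]
  rw [norm_mul, Complex.norm_I, one_mul, norm_sqrt2_inv]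
  rw [show ((Real.sqrt 2)⁻¹ ^ 2 + (Real.sqrt 2)⁻¹ ^ 2 : ℝ) = 1 by
    field_simp; rw [Real.sq_sqrt (by norm_num)]; norm_num]
  exact Real.sqrt_one

lemma vnorm_uvec_conj : vnorm (fun k => (starRingEnd ℂ) (uvec k)) = 1 := by
  have h : ∀ k, ‖(starRingEnd ℂ) (uvec k)‖ = ‖uvec k‖ := fun k => RCLike.norm_conj _
  unfold vnorm
  simp only [h]
  exact vnorm_uvec

lemma sum_uu' : ∑ k, uvec k * (starRingEnd ℂ) (uvec k) = 1 := by
  rw [Fin.sum_univ_two, uvec0, uvec1]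
  rw [map_mul, Complex.conj_I, map_inv₀, Complex.conj_ofReal]
  have h := sqrt2C_ne
  field_simp
  linear_combination -sqrt2C_sq - Complex.I_sq

lemma sum_uu : ∑ k, uvec k * uvec k = 0 := by
  rw [Fin.sum_univ_two, uvec0, uvec1]
  have : Complex.I ^ 2 = -1 := Complex.I_sq
  linear_combination (((Real.sqrt 2:ℝ):ℂ))⁻¹^2 * this
lemma tinner_smul_add {d n : ℕ} (a b : ℂ) (S R Y : (Fin d → Fin n) → ℂ) :
    tinner (fun i => a * S i + b * R i) Y = a * tinner S Y + b * tinner R Y := by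
  unfold tinner
  rw [Finset.mul_sum, Finset.mul_sum, ← Finset.sum_add_distrib]
  refine Finset.sum_congr rfl fun i _ => ?_
  ring

lemma tinner_conj {d n : ℕ} (S Y : (Fin d → Fin n) → ℂ) :
    tinner S Y = (starRingEnd ℂ) (tinner Y S) := by
  unfold tinner
  rw [map_sum]
  refine Finset.sum_congr rfl fun i _ => ?_
  rw [map_mul, Complex.conj_conj]
  ring

lemma tinner_sum_left {d n m : ℕ} (S : Fin m → (Fin d → Fin n) → ℂ) (Y : (Fin d → Fin n) → ℂ) :
    tinner (∑ i, S i) Y = ∑ i, tinner (S i) Y := by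
  unfold tinner
  rw [Finset.sum_comm]
  refine Finset.sum_congr rfl fun i _ => ?_
  rw [← Finset.sum_mul, Finset.sum_apply]

def Uten (n : ℕ) : Fin n → Fin 2 → ℂ := fun _ => uvec
def Vten (n : ℕ) : Fin n → Fin 2 → ℂ := fun _ k => (starRingEnd ℂ) (uvec k)

lemma Tnl_eq (n : ℕ) (lam : ℂ) : Tnl n lam = fun i =>
    (lam / (Real.sqrt 2 : ℂ)) * rankOne (Uten n) i
      + ((starRingEnd ℂ) lam / (Real.sqrt 2 : ℂ)) * rankOne (Vten n) i := by
  funext i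
  unfold Tnl rankOne Uten Vten
  ring

lemma tinner_Tnl {n : ℕ} (lam : ℂ) (Y : (Fin n → Fin 2) → ℂ) :
    tinner (Tnl n lam) Y = (lam / (Real.sqrt 2 : ℂ)) * tinner (rankOne (Uten n)) Y
      + ((starRingEnd ℂ) lam / (Real.sqrt 2 : ℂ)) * tinner (rankOne (Vten n)) Y := by
  rw [Tnl_eq, tinner_smul_add]

lemma ab_sq (v : Fin 2 → ℂ) :
    ‖∑ k, uvec k * (starRingEnd ℂ) (v k)‖ ^ 2
      + ‖∑ k, (starRingEnd ℂ) (uvec k) * (starRingEnd ℂ) (v k)‖ ^ 2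
      = vnorm v ^ 2 := by
  rw [vnorm_sq, Fin.sum_univ_two, Fin.sum_univ_two, Fin.sum_univ_two, uvec0, uvec1]
  rw [map_mul, Complex.conj_I, map_inv₀, Complex.conj_ofReal]
  have h2 : (Real.sqrt 2)⁻¹ ^ 2 = 2⁻¹ := by
    rw [inv_pow]; congr 1; rw [sq]; exact sqrt2_mul_self
  set p := (starRingEnd ℂ) (v 0)
  set q := (starRingEnd ℂ) (v 1)
  have hp : ‖p‖ = ‖v 0‖ := RCLike.norm_conj _
  have hq : ‖q‖ = ‖v 1‖ := RCLike.norm_conj _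
  rw [← hp, ← hq]
  have e1 : (Real.sqrt 2:ℂ)⁻¹ * p + Complex.I * (Real.sqrt 2:ℂ)⁻¹ * q
      = (Real.sqrt 2:ℂ)⁻¹ * (p + Complex.I * q) := by ring
  have e2 : (Real.sqrt 2:ℂ)⁻¹ * p + -Complex.I * (Real.sqrt 2:ℂ)⁻¹ * q
      = (Real.sqrt 2:ℂ)⁻¹ * (p - Complex.I * q) := by ring
  rw [e1, e2, norm_mul, norm_mul, norm_sqrt2_inv, mul_pow, mul_pow, h2]
  have hpar : ‖p + Complex.I * q‖ ^ 2 + ‖p - Complex.I * q‖ ^ 2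
      = 2 * (‖p‖ ^ 2 + ‖q‖ ^ 2) := by
    have := norm_add_sq_real p (Complex.I * q)
    have := norm_sub_sq_real p (Complex.I * q)
    rw [norm_add_sq_real, norm_sub_sq_real, norm_mul, Complex.norm_I, one_mul]
    ring
  nlinarith [hpar]
lemma norm_le_vnorm (x : Fin 2 → ℂ) :
    ‖∑ k, uvec k * (starRingEnd ℂ) (x k)‖ ≤ vnorm x ∧
    ‖∑ k, (starRingEnd ℂ) (uvec k) * (starRingEnd ℂ) (x k)‖ ≤ vnorm x := by
  have h := ab_sq x
  constructor <;>
    nlinarith [norm_nonneg (∑ k, uvec k * (starRingEnd ℂ) (x k)),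
      norm_nonneg (∑ k, (starRingEnd ℂ) (uvec k) * (starRingEnd ℂ) (x k)),
      vnorm_nonneg x]

open Finset in
lemma key (n : ℕ) (hn : 2 ≤ n) (lam : ℂ) (hlam : ‖lam‖ = 1)
    (x : Fin n → Fin 2 → ℂ) :
    ‖tinner (Tnl n lam) (rankOne x)‖ ≤ (Real.sqrt 2)⁻¹ * ∏ j, vnorm (x j) := by
  set a : Fin n → ℂ := fun j => ∑ k, uvec k * (starRingEnd ℂ) (x j k) with ha
  set b : Fin n → ℂ := fun j => ∑ k, (starRingEnd ℂ) (uvec k) * (starRingEnd ℂ) (x j k)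
    with hb
  have hT : tinner (Tnl n lam) (rankOne x)
      = (lam / (Real.sqrt 2 : ℂ)) * ∏ j, a j
        + ((starRingEnd ℂ) lam / (Real.sqrt 2 : ℂ)) * ∏ j, b j := by
    rw [tinner_Tnl, tinner_rankOne, tinner_rankOne]
    simp only [Uten, Vten, ha, hb]
  have hnl : ‖lam‖ = 1 := by rw [hlam]
  have hdiv : ‖lam / (Real.sqrt 2 : ℂ)‖ = (Real.sqrt 2)⁻¹ := by
    rw [norm_div, hnl, Complex.norm_real, Real.norm_eq_abs,
      abs_of_nonneg (Real.sqrt_nonneg 2), one_div]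
  have hdiv' : ‖(starRingEnd ℂ) lam / (Real.sqrt 2 : ℂ)‖ = (Real.sqrt 2)⁻¹ := by
    rw [norm_div, RCLike.norm_conj, hnl, Complex.norm_real, Real.norm_eq_abs,
      abs_of_nonneg (Real.sqrt_nonneg 2), one_div]
  -- bound the two products
  set j0 : Fin n := ⟨0, by omega⟩
  set j1 : Fin n := ⟨1, by omega⟩
  have hne : j0 ≠ j1 := by simp [j0, j1, Fin.ext_iff]
  set s : Finset (Fin n) := {j0, j1} with hs
  have hsub : s ⊆ univ := subset_univ s
  set P : ℝ := ∏ j ∈ univ \ s, vnorm (x j) with hP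
  have hPn : 0 ≤ P := prod_nonneg fun j _ => vnorm_nonneg _
  have haj : ∀ j, ‖a j‖ ≤ vnorm (x j) := fun j => (norm_le_vnorm (x j)).1
  have hbj : ∀ j, ‖b j‖ ≤ vnorm (x j) := fun j => (norm_le_vnorm (x j)).2
  have hsplit : ∀ f : Fin n → ℝ, ∏ j, f j = (∏ j ∈ univ \ s, f j) * (f j0 * f j1) := by
    intro f
    rw [← Finset.prod_sdiff hsub, Finset.prod_pair hne]
  have hprodA : ∏ j, ‖a j‖ ≤ P * (‖a j0‖ * ‖a j1‖) := by
    rw [hsplit fun j => ‖a j‖]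
    refine mul_le_mul_of_nonneg_right ?_ (by positivity)
    exact prod_le_prod (fun j _ => norm_nonneg _) (fun j _ => haj j)
  have hprodB : ∏ j, ‖b j‖ ≤ P * (‖b j0‖ * ‖b j1‖) := by
    rw [hsplit fun j => ‖b j‖]
    refine mul_le_mul_of_nonneg_right ?_ (by positivity)
    exact prod_le_prod (fun j _ => norm_nonneg _) (fun j _ => hbj j)
  have h0 := ab_sq (x j0)
  have h1 := ab_sq (x j1)
  have hC : ‖a j0‖ * ‖a j1‖ + ‖b j0‖ * ‖b j1‖ ≤ vnorm (x j0) * vnorm (x j1) := by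
    nlinarith [sq_nonneg (‖a j0‖ * ‖b j1‖ - ‖a j1‖ * ‖b j0‖),
      norm_nonneg (a j0), norm_nonneg (a j1), norm_nonneg (b j0), norm_nonneg (b j1),
      vnorm_nonneg (x j0), vnorm_nonneg (x j1),
      mul_nonneg (vnorm_nonneg (x j0)) (vnorm_nonneg (x j1))]
  have hsum : ∏ j, ‖a j‖ + ∏ j, ‖b j‖ ≤ ∏ j, vnorm (x j) := by
    rw [hsplit fun j => vnorm (x j)]
    calc ∏ j, ‖a j‖ + ∏ j, ‖b j‖
        ≤ P * (‖a j0‖ * ‖a j1‖) + P * (‖b j0‖ * ‖b j1‖) := add_le_add hprodA hprodB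
      _ = P * (‖a j0‖ * ‖a j1‖ + ‖b j0‖ * ‖b j1‖) := by ring
      _ ≤ P * (vnorm (x j0) * vnorm (x j1)) := mul_le_mul_of_nonneg_left hC hPn
  calc ‖tinner (Tnl n lam) (rankOne x)‖
      ≤ ‖(lam / (Real.sqrt 2 : ℂ)) * ∏ j, a j‖
        + ‖((starRingEnd ℂ) lam / (Real.sqrt 2 : ℂ)) * ∏ j, b j‖ := by
        rw [hT]; exact norm_add_le _ _
    _ = (Real.sqrt 2)⁻¹ * (∏ j, ‖a j‖) + (Real.sqrt 2)⁻¹ * (∏ j, ‖b j‖) := by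
        rw [norm_mul, norm_mul, hdiv, hdiv', norm_prod, norm_prod]
    _ = (Real.sqrt 2)⁻¹ * (∏ j, ‖a j‖ + ∏ j, ‖b j‖) := by ring
    _ ≤ (Real.sqrt 2)⁻¹ * ∏ j, vnorm (x j) := by
        exact mul_le_mul_of_nonneg_left hsum (by positivity)
lemma sum_cucu : ∑ k, (starRingEnd ℂ) (uvec k) * (starRingEnd ℂ) (uvec k) = 0 := by
  have : ∀ k : Fin 2, (starRingEnd ℂ) (uvec k) * (starRingEnd ℂ) (uvec k)
      = (starRingEnd ℂ) (uvec k * uvec k) := fun k => (map_mul _ _ _).symm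
  simp only [this]
  rw [← map_sum, sum_uu, map_zero]

lemma sum_cuu : ∑ k, (starRingEnd ℂ) (uvec k) * (starRingEnd ℂ) ((starRingEnd ℂ) (uvec k)) = 1 := by
  simp only [Complex.conj_conj]
  have : ∀ k : Fin 2, (starRingEnd ℂ) (uvec k) * uvec k = uvec k * (starRingEnd ℂ) (uvec k) :=
    fun k => mul_comm _ _
  simp only [this]
  exact sum_uu'

lemma tinner_T_U (n : ℕ) (hn : 1 ≤ n) (lam : ℂ) :
    tinner (Tnl n lam) (rankOne (Uten n)) = lam / (Real.sqrt 2 : ℂ) := by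
  rw [tinner_Tnl, tinner_rankOne, tinner_rankOne]
  simp only [Uten, Vten]
  rw [show ∏ _j : Fin n, (∑ k, uvec k * (starRingEnd ℂ) (uvec k)) = 1 by
    rw [sum_uu']; simp]
  rw [show ∏ _j : Fin n, (∑ k, (starRingEnd ℂ) (uvec k) * (starRingEnd ℂ) (uvec k)) = 0 by
    rw [sum_cucu, Finset.prod_const, zero_pow (by simp [Finset.card_univ]; omega)]]
  ring

lemma tinner_T_V (n : ℕ) (hn : 1 ≤ n) (lam : ℂ) :
    tinner (Tnl n lam) (rankOne (Vten n)) = (starRingEnd ℂ) lam / (Real.sqrt 2 : ℂ) := by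
  rw [tinner_Tnl, tinner_rankOne, tinner_rankOne]
  simp only [Uten, Vten]
  rw [show ∏ _j : Fin n, (∑ k, uvec k * (starRingEnd ℂ) ((starRingEnd ℂ) (uvec k))) = 0 by
    simp only [Complex.conj_conj]; rw [sum_uu, Finset.prod_const, zero_pow (by simp [Finset.card_univ]; omega)]]
  rw [show ∏ _j : Fin n, (∑ k, (starRingEnd ℂ) (uvec k) * (starRingEnd ℂ) ((starRingEnd ℂ) (uvec k)))
      = 1 by rw [sum_cuu]; simp]
  ring

lemma tinner_TT (n : ℕ) (hn : 1 ≤ n) (lam : ℂ) (hlam : ‖lam‖ = 1) :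
    tinner (Tnl n lam) (Tnl n lam) = 1 := by
  have hU := tinner_conj (rankOne (Uten n)) (Tnl n lam)
  have hV := tinner_conj (rankOne (Vten n)) (Tnl n lam)
  rw [tinner_Tnl, hU, hV, tinner_T_U n hn, tinner_T_V n hn]
  rw [map_div₀, map_div₀, Complex.conj_conj, Complex.conj_ofReal]
  have hml : lam * (starRingEnd ℂ) lam = 1 := by
    rw [Complex.mul_conj, Complex.normSq_eq_norm_sq, hlam]; norm_num
  have hs := sqrt2C_ne
  field_simp
  linear_combination (-lam * (starRingEnd ℂ) lam) * sqrt2C_sq + ((Real.sqrt 2:ℝ):ℂ)^2 * hml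
lemma norm_div_sqrt2 (z : ℂ) (hz : ‖z‖ = 1) :
    ‖z / (Real.sqrt 2 : ℂ)‖ = (Real.sqrt 2)⁻¹ := by
  rw [norm_div, hz, Complex.norm_real, Real.norm_eq_abs,
    abs_of_nonneg (Real.sqrt_nonneg 2), one_div]

open Finset in
theorem stmt17' (n : ℕ) (hn : 2 ≤ n) (lam : ℂ) (hlam : ‖lam‖ = 1) :
    specNorm (Tnl n lam) = (Real.sqrt 2)⁻¹ ∧ nucNorm (Tnl n lam) = Real.sqrt 2 := by
  have hn1 : 1 ≤ n := by omega
  have hclam : ‖(starRingEnd ℂ) lam‖ = 1 := by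
    rw [RCLike.norm_conj, hlam]
  constructor
  · -- spectral norm
    set S := {r : ℝ | ∃ x : Fin n → Fin 2 → ℂ, (∀ j, vnorm (x j) = 1) ∧
      r = ‖tinner (Tnl n lam) (rankOne x)‖} with hS
    have hub : ∀ r ∈ S, r ≤ (Real.sqrt 2)⁻¹ := by
      rintro r ⟨x, hx, rfl⟩
      have := key n hn lam hlam x
      rwa [show ∏ j, vnorm (x j) = 1 from by
        rw [Finset.prod_congr rfl fun j _ => hx j, Finset.prod_const, one_pow], mul_one] at this
    have hmem : (Real.sqrt 2)⁻¹ ∈ S := by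
      refine ⟨Uten n, fun j => vnorm_uvec, ?_⟩
      rw [tinner_T_U n hn1, norm_div_sqrt2 lam hlam]
    exact le_antisymm (Real.sSup_le hub (by positivity)) (le_csSup ⟨_, hub⟩ hmem)
  · -- nuclear norm
    set S := {r : ℝ | ∃ (m : ℕ) (x : Fin m → Fin n → Fin 2 → ℂ),
      Tnl n lam = (∑ i, rankOne (x i)) ∧ r = ∑ i, ∏ j, vnorm (x i j)} with hS
    have hlb : ∀ r ∈ S, Real.sqrt 2 ≤ r := by
      rintro r ⟨m, x, hdec, rfl⟩
      have h1 : (1 : ℝ) ≤ (Real.sqrt 2)⁻¹ * ∑ i, ∏ j, vnorm (x i j) := by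
        have e0 : (1 : ℝ) = ‖tinner (Tnl n lam) (Tnl n lam)‖ := by
          rw [tinner_TT n hn1 lam hlam]; simp
        have e1 : tinner (Tnl n lam) (Tnl n lam)
            = ∑ i, tinner (rankOne (x i)) (Tnl n lam) := by
          nth_rewrite 1 [hdec]
          exact tinner_sum_left _ _
        calc (1:ℝ) = ‖∑ i, tinner (rankOne (x i)) (Tnl n lam)‖ := by rw [← e1, ← e0]
          _ ≤ ∑ i, ‖tinner (rankOne (x i)) (Tnl n lam)‖ := norm_sum_le _ _
          _ = ∑ i, ‖tinner (Tnl n lam) (rankOne (x i))‖ := by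
              refine Finset.sum_congr rfl fun i _ => ?_
              rw [tinner_conj, RCLike.norm_conj]
          _ ≤ ∑ i, (Real.sqrt 2)⁻¹ * ∏ j, vnorm (x i j) :=
              Finset.sum_le_sum fun i _ => key n hn lam hlam (x i)
          _ = (Real.sqrt 2)⁻¹ * ∑ i, ∏ j, vnorm (x i j) := by rw [← Finset.mul_sum]
      have hinv : Real.sqrt 2 * (Real.sqrt 2)⁻¹ = 1 := mul_inv_cancel₀ (ne_of_gt sqrt2_pos)
      calc Real.sqrt 2 = Real.sqrt 2 * 1 := (mul_one _).symm
        _ ≤ Real.sqrt 2 * ((Real.sqrt 2)⁻¹ * ∑ i, ∏ j, vnorm (x i j)) :=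
            mul_le_mul_of_nonneg_left h1 (le_of_lt sqrt2_pos)
        _ = ∑ i, ∏ j, vnorm (x i j) := by rw [← mul_assoc, hinv, one_mul]
    have hmem : Real.sqrt 2 ∈ S := by
      have h0n : (0 : ℕ) < n := by omega
      set j0 : Fin n := ⟨0, h0n⟩ with hj0
      set c : Fin 2 → ℂ := ![lam / (Real.sqrt 2 : ℂ), (starRingEnd ℂ) lam / (Real.sqrt 2 : ℂ)]
        with hc
      set w : Fin 2 → Fin 2 → ℂ := ![uvec, fun k => (starRingEnd ℂ) (uvec k)] with hw
      set xd : Fin 2 → Fin n → Fin 2 → ℂ :=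
        fun i j k => (if j = j0 then c i else 1) * w i k with hxd
      have hrank : ∀ i, rankOne (xd i) = fun t => c i * ∏ j, w i (t j) := by
        intro i
        funext t
        unfold rankOne
        simp only [hxd]
        rw [Finset.prod_mul_distrib, Finset.prod_ite_eq' Finset.univ j0 (fun _ => c i)]
        simp
      refine ⟨2, xd, ?_, ?_⟩
      · funext t
        rw [Fin.sum_univ_two, hrank 0, hrank 1]
        simp only [hc, hw, Matrix.cons_val_zero, Matrix.cons_val_one, Matrix.head_cons,
          Pi.add_apply]
        unfold Tnl
        ring
      · have hcost : ∀ i, ∏ j, vnorm (xd i j) = ‖c i‖ := by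
          intro i
          have hv : ∀ j, vnorm (xd i j) = (if j = j0 then ‖c i‖ else 1) * 1 := by
            intro j
            have : vnorm (xd i j) = ‖if j = j0 then c i else 1‖ * vnorm (w i) := by
              simp only [hxd]
              exact vnorm_smul _ _
            rw [this, apply_ite norm, norm_one]
            congr 1
            fin_cases i
            · simp only [hw, Matrix.cons_val_zero]; exact vnorm_uvec
            · simp only [hw, Matrix.cons_val_one, Matrix.head_cons]; exact vnorm_uvec_conj
          simp only [hv, mul_one]
          rw [Finset.prod_ite_eq' Finset.univ j0 (fun _ => ‖c i‖)]
          simp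
        rw [Fin.sum_univ_two, hcost 0, hcost 1]
        simp only [hc, Matrix.cons_val_zero, Matrix.cons_val_one, Matrix.head_cons]
        rw [norm_div_sqrt2 lam hlam, norm_div_sqrt2 _ hclam]
        rw [eq_comm, ← sub_eq_zero]
        field_simp
        nlinarith [sqrt2_mul_self]
    exact le_antisymm (csInf_le ⟨Real.sqrt 2, hlb⟩ hmem) (le_csInf ⟨_, hmem⟩ hlb)

/-- For `|λ| = 1` and `n ≥ 2`, `‖T_{n,λ}‖_∞ = 1/√2` and
`‖T_{n,λ}‖₁ = √2`. -/
theorem stmt17 (n : ℕ) (hn : 2 ≤ n) (lam : ℂ) (hlam : ‖lam‖ = 1) :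
    specNorm (Tnl n lam) = (Real.sqrt 2)⁻¹ ∧ nucNorm (Tnl n lam) = Real.sqrt 2 := by
  exact stmt17' n hn lam hlam
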